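/- arXiv:2205.13374 — 2 statements merged into one kernel-verified Lean document; each statement's English description precedes it below -/
import Mathlib

section
/- Let G be a formal power series in x, y_1, …, y_t over ℚ with zero constant term satisfying G = x·∏_{i=1}^{t}(1 + y_i·G). Then for every integer n ≥ 1 and every tuple of natural numbers (a_1, …, a_t) with a_1 + ⋯ + a_t = n − 1, the coefficient of x^n·y_1^{a_1}⋯y_t^{a_t} in G equals (1/n)·C(n,a_1)·C(n,a_2)⋯C(n,a_t), where C(n,k) denotes the binomial coefficient. -/
open Finset

lemma vand (k m a : ℕ) :
    ∑ u ∈ range (a + 1), k.choose u * m.choose (a - u) = (k + m).choose a := by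
  rw [Nat.add_choose_eq, Finset.Nat.sum_antidiagonal_eq_sum_range_succ_mk]

lemma vandW (k m a : ℕ) :
    (k + m) * ∑ u ∈ range (a + 1), u * (k.choose u * m.choose (a - u))
      = k * a * (k + m).choose a := by
  rcases Nat.eq_zero_or_pos k with hk | hk
  · subst hk
    have : ∀ u ∈ range (a+1), u * (Nat.choose 0 u * m.choose (a - u)) = 0 := by
      intro u _
      rcases Nat.eq_zero_or_pos u with h | h
      · simp [h]
      · simp [Nat.choose_eq_zero_of_lt h]
    rw [Finset.sum_congr rfl this]
    simp
  rcases Nat.eq_zero_or_pos a with ha | ha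
  · subst ha; simp
  obtain ⟨k', rfl⟩ := Nat.exists_eq_add_of_lt hk
  obtain ⟨a', rfl⟩ := Nat.exists_eq_add_of_lt ha
  simp only [Nat.zero_add] at *
  have hshift : ∑ u ∈ range (a' + 1 + 1), u * ((k'+1).choose u * m.choose (a' + 1 - u))
      = ∑ u ∈ range (a' + 1), (u+1) * ((k'+1).choose (u+1) * m.choose (a' - u)) := by
    rw [Finset.sum_range_succ']
    simp
  rw [hshift]
  have h2 : ∀ u, (u+1) * ((k'+1).choose (u+1) * m.choose (a' - u))
      = (k'+1) * (k'.choose u * m.choose (a' - u)) := by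
    intro u
    have := Nat.add_one_mul_choose_eq k' u
    calc (u+1) * ((k'+1).choose (u+1) * m.choose (a' - u))
        = ((k'+1).choose (u+1) * (u+1)) * m.choose (a' - u) := by ring
      _ = ((k'+1) * k'.choose u) * m.choose (a' - u) := by rw [← this]
      _ = (k'+1) * (k'.choose u * m.choose (a' - u)) := by ring
  rw [Finset.sum_congr rfl (fun u _ => h2 u), ← Finset.mul_sum, vand k' m a']
  have h3 := Nat.add_one_mul_choose_eq (k' + m) a'
  have hrw : k' + 1 + m = (k' + m) + 1 := by omega
  rw [hrw]
  calc (k' + m + 1) * ((k' + 1) * (k' + m).choose a')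
      = (k'+1) * ((k' + m + 1) * (k' + m).choose a') := by ring
    _ = (k'+1) * ((k' + m + 1).choose (a'+1) * (a'+1)) := by rw [h3]
    _ = (k' + 1) * (a' + 1) * (k' + m + 1).choose (a' + 1) := by ring

noncomputable def dd (t k n : ℕ) (a : Fin t → ℕ) : ℚ :=
  if n = 0 then (if k = 0 ∧ a = 0 then 1 else 0)
  else if (∑ i, a i) + k = n then (k / n : ℚ) * ∏ i, ((n.choose (a i) : ℚ)) else 0

lemma key (t k n : ℕ) (hk : 1 ≤ k) (a : Fin t → ℕ) :
    ∑ j ∈ Fintype.piFinset (fun _ : Fin t => range (k+1)),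
      (∏ i, (k.choose (j i) : ℚ)) *
        (if k ≤ n ∧ ∀ i, j i ≤ a i then dd t (∑ i, j i) (n - k) (fun i => a i - j i) else 0)
    = dd t k n a := by
  by_cases hkn : k ≤ n
  case neg =>
    rw [Finset.sum_eq_zero (fun j _ => by simp [hkn])]
    unfold dd
    split_ifs with h1 h2 h3 <;> try rfl
    · exact absurd h2.1 (by omega)
    · exact absurd h3 (by omega)
  set m := n - k with hm
  have hn : n = k + m := by omega
  by_cases hma : (∑ i, a i) = m
  case neg =>
    -- both sides are zero
    have hL : ∀ j ∈ Fintype.piFinset (fun _ : Fin t => range (k+1)),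
        (∏ i, (k.choose (j i) : ℚ)) *
        (if k ≤ n ∧ ∀ i, j i ≤ a i then dd t (∑ i, j i) (n - k) (fun i => a i - j i) else 0) = 0 := by
      intro j _
      rcases Classical.em (∀ i, j i ≤ a i) with hja | hja
      · have hsum : (∑ i, (a i - j i)) + (∑ i, j i) = ∑ i, a i := by
          rw [← Finset.sum_add_distrib]
          exact Finset.sum_congr rfl fun i _ => by have := hja i; omega
        rw [if_pos ⟨hkn, hja⟩]
        unfold dd
        by_cases h1 : n - k = 0
        · rw [if_pos h1, if_neg, mul_zero]
          rintro ⟨hj0, haj0⟩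
          apply hma
          have h0 : ∀ i, a i = 0 := by
            intro i
            have h2 := Finset.sum_eq_zero_iff.mp hj0 i (Finset.mem_univ i)
            have h3 := congrFun haj0 i
            simp only [Pi.zero_apply] at h3
            omega
          rw [Finset.sum_eq_zero fun i _ => h0 i]
          omega
        · rw [if_neg h1, if_neg, mul_zero]
          intro h2
          apply hma
          have h3 : ∑ i, (a i - j i) + ∑ i, j i = n - k := by simpa using h2
          omega
      · simp [hja]
    rw [Finset.sum_eq_zero hL]
    unfold dd
    rw [if_neg (by omega), if_neg (by omega)]
  -- now ∑ a = m
  by_cases hm0 : m = 0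
  · -- a = 0, n = k
    have ha0 : ∀ i, a i = 0 := by
      intro i
      have := Finset.sum_eq_zero_iff.mp (hma.trans hm0) i (Finset.mem_univ i)
      exact this
    rw [Finset.sum_eq_single (0 : Fin t → ℕ)]
    · simp only [Pi.zero_apply, Nat.choose_zero_right, Nat.cast_one, Finset.prod_const_one,
        one_mul]
      rw [if_pos ⟨hkn, fun i => Nat.zero_le _⟩]
      unfold dd
      rw [if_pos hm0, if_pos ⟨by simp, funext fun i => by simp [ha0 i]⟩]
      rw [if_neg (by omega), if_pos (by omega)]
      have hk0 : (k:ℚ) ≠ 0 := by positivity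
      rw [Finset.prod_congr rfl (fun i _ => by rw [ha0 i]), hn, hm0]
      simp [Nat.choose_zero_right, div_self hk0]
    · intro j _ hj
      have hno : ¬ (∀ i, j i ≤ a i) := by
        intro hle
        apply hj
        funext i
        have h1 := hle i
        have h2 := ha0 i
        simp only [Pi.zero_apply]
        omega
      simp [hno]
    · intro h
      exfalso
      apply h
      simp [Fintype.mem_piFinset]
  · -- main case: m ≥ 1
    have hn1 : 1 ≤ n := by omega
    have hn0 : (n:ℚ) ≠ 0 := by
      simp only [ne_eq, Nat.cast_eq_zero]; omega
    have hm0' : (m:ℚ) ≠ 0 := by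
      simp only [ne_eq, Nat.cast_eq_zero]; omega
    set g : Fin t → ℕ → ℚ := fun i u => (k.choose u : ℚ) * (m.choose (a i - u) : ℚ) with hg
    set F : (Fin t → ℕ) → ℚ := fun j =>
      if ∀ i, j i ≤ a i then ((∑ i, j i : ℕ) : ℚ) / m * ∏ i, g i (j i) else 0 with hF
    have hdd : ∀ j : Fin t → ℕ, (∀ i, j i ≤ a i) →
        dd t (∑ i, j i) m (fun i => a i - j i)
          = ((∑ i, j i : ℕ) : ℚ) / m * ∏ i, ((m.choose (a i - j i) : ℚ)) := by
      intro j hja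
      unfold dd
      rw [if_neg hm0, if_pos]
      have hs : ∑ i, (a i - j i) + ∑ i, j i = ∑ i, a i := by
        rw [← Finset.sum_add_distrib]
        exact Finset.sum_congr rfl fun i _ => by have := hja i; omega
      simp only
      omega
    have step1 : ∑ j ∈ Fintype.piFinset (fun _ : Fin t => range (k+1)),
        (∏ i, (k.choose (j i) : ℚ)) *
          (if k ≤ n ∧ ∀ i, j i ≤ a i then dd t (∑ i, j i) m (fun i => a i - j i) else 0)
        = ∑ j ∈ Fintype.piFinset (fun _ : Fin t => range (k+1)), F j := by
      refine Finset.sum_congr rfl fun j _ => ?_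
      by_cases hja : ∀ i, j i ≤ a i
      · rw [if_pos ⟨hkn, hja⟩, hdd j hja, hF]
        simp only [if_pos hja, hg]
        rw [Finset.prod_mul_distrib]
        ring
      · rw [if_neg (fun h => hja h.2), mul_zero, hF]
        simp only [if_neg hja]
    rw [step1]
    have hsub1 : Fintype.piFinset (fun _ : Fin t => range (k+1))
        ⊆ Fintype.piFinset (fun i => range (k + a i + 1)) := by
      apply Fintype.piFinset_subset
      intro i
      intro u hu
      simp only [Finset.mem_range] at *
      omega
    have hsub2 : Fintype.piFinset (fun i : Fin t => range (a i + 1))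
        ⊆ Fintype.piFinset (fun i => range (k + a i + 1)) := by
      apply Fintype.piFinset_subset
      intro i u hu
      simp only [Finset.mem_range] at *
      omega
    have hbig1 : ∑ j ∈ Fintype.piFinset (fun _ : Fin t => range (k+1)), F j
        = ∑ j ∈ Fintype.piFinset (fun i => range (k + a i + 1)), F j := by
      refine Finset.sum_subset hsub1 fun j _ hj => ?_
      rw [Fintype.mem_piFinset] at hj
      push_neg at hj
      obtain ⟨i, hi⟩ := hj
      rw [Finset.mem_range] at hi
      push_neg at hi
      have hz : g i (j i) = 0 := by
        rw [hg]
        simp only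
        rw [Nat.choose_eq_zero_of_lt (by omega)]
        simp
      rw [hF]
      simp only
      split_ifs with h
      · rw [Finset.prod_eq_zero (Finset.mem_univ i) hz, mul_zero]
      · rfl
    have hbig2 : ∑ j ∈ Fintype.piFinset (fun i : Fin t => range (a i + 1)), F j
        = ∑ j ∈ Fintype.piFinset (fun i => range (k + a i + 1)), F j := by
      refine Finset.sum_subset hsub2 fun j _ hj => ?_
      rw [Fintype.mem_piFinset] at hj
      push_neg at hj
      obtain ⟨i, hi⟩ := hj
      rw [Finset.mem_range] at hi
      push_neg at hi
      rw [hF]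
      simp only
      rw [if_neg]
      intro h
      have := h i
      omega
    rw [hbig1, ← hbig2]
    -- on boxA the guard holds
    have step2 : ∑ j ∈ Fintype.piFinset (fun i : Fin t => range (a i + 1)), F j
        = (1/m) * ∑ j ∈ Fintype.piFinset (fun i : Fin t => range (a i + 1)),
            ∑ i, (j i : ℚ) * ∏ i', g i' (j i') := by
      rw [Finset.mul_sum]
      refine Finset.sum_congr rfl fun j hj => ?_
      rw [Fintype.mem_piFinset] at hj
      have hja : ∀ i, j i ≤ a i := fun i => by
        have := hj i; rw [Finset.mem_range] at this; omega
      rw [hF]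
      simp only [if_pos hja]
      rw [Nat.cast_sum, ← Finset.sum_mul]
      ring
    rw [step2, Finset.sum_comm]
    -- now evaluate the inner sums
    have key_i : ∀ i : Fin t,
        ∑ j ∈ Fintype.piFinset (fun i : Fin t => range (a i + 1)),
          (j i : ℚ) * ∏ i', g i' (j i')
        = ((k : ℚ) * a i / n) * ∏ i', (n.choose (a i') : ℚ) := by
      intro i
      have hterm : ∀ j : Fin t → ℕ, (j i : ℚ) * ∏ i', g i' (j i')
          = ∏ i', ((if i' = i then (j i' : ℚ) else 1) * g i' (j i')) := by
        intro j
        have hd : ∏ i', ((if i' = i then (j i' : ℚ) else 1) * g i' (j i'))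
            = (∏ i', (if i' = i then (j i' : ℚ) else 1)) * ∏ i', g i' (j i') :=
          Finset.prod_mul_distrib
        rw [hd, Finset.prod_ite_eq' Finset.univ i (fun i' => (j i' : ℚ))]
        simp
      rw [Finset.sum_congr rfl fun j _ => hterm j]
      rw [← Finset.prod_univ_sum (fun i' : Fin t => range (a i' + 1))
        (fun i' u => (if i' = i then (u : ℚ) else 1) * g i' u)]
      have hA : ∀ i' : Fin t,
          ∑ u ∈ range (a i' + 1), (k.choose u : ℚ) * (m.choose (a i' - u) : ℚ)
            = (n.choose (a i') : ℚ) := by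
        intro i'
        rw [hn, ← vand k m (a i')]
        push_cast
        rfl
      have hB : ∀ i' : Fin t,
          ∑ u ∈ range (a i' + 1), (u : ℚ) * ((k.choose u : ℚ) * (m.choose (a i' - u) : ℚ))
            = (k : ℚ) * (a i') / n * (n.choose (a i') : ℚ) := by
        intro i'
        rw [hn]
        have h := congrArg (Nat.cast : ℕ → ℚ) (vandW k m (a i'))
        push_cast at h
        have hkm : ((k : ℚ) + m) ≠ 0 := by
          have : (1:ℚ) ≤ (k:ℚ) := by exact_mod_cast hk
          positivity
        push_cast
        rw [div_mul_eq_mul_div, eq_div_iff hkm]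
        linear_combination h
      have hinner : ∀ i' : Fin t,
          ∑ u ∈ range (a i' + 1), (if i' = i then (u : ℚ) else 1) * g i' u
            = (if i' = i then (k : ℚ) * (a i') / n else 1) * (n.choose (a i') : ℚ) := by
        intro i'
        by_cases hii : i' = i
        · simp only [if_pos hii]
          exact hB i'
        · simp only [if_neg hii, one_mul]
          exact hA i'
      rw [Finset.prod_congr rfl (fun i' _ => hinner i')]
      have hd2 : ∏ i', ((if i' = i then (k : ℚ) * (a i') / n else 1) * (n.choose (a i') : ℚ))
          = (∏ i', (if i' = i then (k : ℚ) * (a i') / n else 1)) * ∏ i', (n.choose (a i') : ℚ) :=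
        Finset.prod_mul_distrib
      rw [hd2, Finset.prod_ite_eq' Finset.univ i (fun i' => (k : ℚ) * (a i') / n)]
      simp
    rw [Finset.sum_congr rfl fun i _ => key_i i]
    rw [← Finset.sum_mul]
    have hsa : ∑ i, (k:ℚ) * (a i) / n = (k:ℚ) * m / n := by
      rw [← Finset.sum_div, ← Finset.mul_sum, ← Nat.cast_sum, hma]
    rw [hsa]
    unfold dd
    rw [if_neg (by omega), if_pos (by omega)]
    field_simp

section helpers
variable {t : ℕ}

lemma ee_eq (k : ℕ) (j : Fin t → ℕ) :
    (Finsupp.equivFunOnFinite.symm (Fin.cons k j) : Fin (t+1) →₀ ℕ)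
      = Finsupp.single 0 k + ∑ i : Fin t, Finsupp.single i.succ (j i) := by
  ext s
  rw [Finsupp.add_apply, Finsupp.finset_sum_apply]
  refine Fin.cases ?_ ?_ s
  · simp [Finsupp.single_apply, Fin.succ_ne_zero]
  · intro p
    have h0 : (0 : Fin (t+1)) ≠ p.succ := (Fin.succ_ne_zero p).symm
    simp [Finsupp.single_apply, Fin.succ_inj, h0]

lemma ee_le (k n : ℕ) (j a : Fin t → ℕ) :
    (Finsupp.equivFunOnFinite.symm (Fin.cons k j) : Fin (t+1) →₀ ℕ)
      ≤ Finsupp.equivFunOnFinite.symm (Fin.cons n a) ↔ k ≤ n ∧ ∀ i, j i ≤ a i := by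
  rw [Finsupp.le_def]
  constructor
  · intro h
    refine ⟨by simpa using h 0, fun i => by simpa using h i.succ⟩
  · rintro ⟨h1, h2⟩ s
    refine Fin.cases ?_ ?_ s
    · simpa using h1
    · intro p; simpa using h2 p

lemma ee_sub (k n : ℕ) (j a : Fin t → ℕ) :
    (Finsupp.equivFunOnFinite.symm (Fin.cons n a) : Fin (t+1) →₀ ℕ)
      - Finsupp.equivFunOnFinite.symm (Fin.cons k j)
      = Finsupp.equivFunOnFinite.symm (Fin.cons (n-k) (fun i => a i - j i)) := by
  ext s
  rw [Finsupp.tsub_apply]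
  refine Fin.cases ?_ ?_ s <;> simp

lemma ee_zero (n : ℕ) (a : Fin t → ℕ) :
    (Finsupp.equivFunOnFinite.symm (Fin.cons n a) : Fin (t+1) →₀ ℕ) = 0
      ↔ n = 0 ∧ a = 0 := by
  rw [Finsupp.ext_iff]
  constructor
  · intro h
    refine ⟨by simpa using h 0, funext fun i => by simpa using h i.succ⟩
  · rintro ⟨h1, h2⟩ s
    refine Fin.cases ?_ ?_ s
    · simpa using h1
    · intro p; simpa using congrFun h2 p

lemma prod_monomial_one {σ : Type*} {ι : Type*} (s : Finset ι) (f : ι → (σ →₀ ℕ)) :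
    ∏ i ∈ s, MvPowerSeries.monomial (f i) (1:ℚ)
      = MvPowerSeries.monomial (∑ i ∈ s, f i) 1 := by
  classical
  induction s using Finset.cons_induction with
  | empty => simp
  | cons a s ha ih =>
      rw [Finset.prod_cons, Finset.sum_cons, ih, MvPowerSeries.monomial_mul_monomial, one_mul]

end helpers

lemma coeff_pow (t : ℕ) (G : MvPowerSeries (Fin (t+1)) ℚ)
    (hG : G = MvPowerSeries.X 0 * ∏ i : Fin t, (1 + MvPowerSeries.X i.succ * G)) (n : ℕ) :
    ∀ (k : ℕ) (a : Fin t → ℕ),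
      MvPowerSeries.coeff (Finsupp.equivFunOnFinite.symm (Fin.cons n a)) (G ^ k)
        = dd t k n a := by
  induction n using Nat.strong_induction_on with
  | _ n IH =>
  intro k a
  rcases Nat.eq_zero_or_pos k with rfl | hk
  · rw [pow_zero, MvPowerSeries.coeff_one]
    unfold dd
    by_cases h : (Finsupp.equivFunOnFinite.symm (Fin.cons n a) : Fin (t+1) →₀ ℕ) = 0
    · obtain ⟨h1, h2⟩ := (ee_zero n a).mp h
      rw [if_pos h, if_pos h1, if_pos ⟨rfl, h2⟩]
    · rw [if_neg h]
      have hno := (ee_zero n a).not.mp h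
      split_ifs with h1 h2 h3
      · exact absurd ⟨h1, h2.2⟩ hno
      · rfl
      · norm_num
      · rfl
  -- now k ≥ 1
  have expand : G ^ k = ∑ j ∈ Fintype.piFinset (fun _ : Fin t => Finset.range (k+1)),
      (MvPowerSeries.monomial (Finsupp.equivFunOnFinite.symm (Fin.cons k j)) (1:ℚ))
        * G ^ (∑ i, j i) * ((∏ i, k.choose (j i) : ℕ) : MvPowerSeries (Fin (t+1)) ℚ) := by
    conv_lhs => rw [hG]
    rw [mul_pow, ← Finset.prod_pow]
    have h2 : ∀ i : Fin t, (1 + MvPowerSeries.X i.succ * G)^k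
        = ∑ u ∈ Finset.range (k+1),
            (MvPowerSeries.X (i.succ : Fin (t+1)) : MvPowerSeries (Fin (t+1)) ℚ) ^ u * G ^ u
              * ((k.choose u : ℕ) : MvPowerSeries (Fin (t+1)) ℚ) := by
      intro i
      rw [add_comm 1 (MvPowerSeries.X i.succ * G), add_pow]
      refine Finset.sum_congr rfl fun u _ => ?_
      rw [mul_pow, one_pow, mul_one]
    rw [Finset.prod_congr rfl fun i _ => h2 i, Finset.prod_univ_sum, Finset.mul_sum]
    refine Finset.sum_congr rfl fun j _ => ?_
    rw [Finset.prod_mul_distrib, Finset.prod_mul_distrib]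
    rw [Finset.prod_pow_eq_pow_sum, ← Nat.cast_prod]
    rw [Finset.prod_congr rfl fun i (_ : i ∈ Finset.univ) => MvPowerSeries.X_pow_eq i.succ (j i)]
    rw [prod_monomial_one Finset.univ (fun i : Fin t => Finsupp.single i.succ (j i))]
    have hmm : MvPowerSeries.monomial (Finsupp.single (0 : Fin (t+1)) k) (1:ℚ)
          * MvPowerSeries.monomial (∑ i : Fin t, Finsupp.single i.succ (j i)) (1:ℚ)
        = MvPowerSeries.monomial
            (Finsupp.single (0 : Fin (t+1)) k + ∑ i : Fin t, Finsupp.single i.succ (j i)) (1:ℚ) := by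
      rw [MvPowerSeries.monomial_mul_monomial, one_mul]
    rw [MvPowerSeries.X_pow_eq, ee_eq, ← hmm]
    ring
  rw [expand, map_sum]
  rw [show dd t k n a = ∑ j ∈ Fintype.piFinset (fun _ : Fin t => Finset.range (k+1)),
      (∏ i, (k.choose (j i) : ℚ)) *
        (if k ≤ n ∧ ∀ i, j i ≤ a i then dd t (∑ i, j i) (n - k) (fun i => a i - j i) else 0)
    from (key t k n hk a).symm]
  refine Finset.sum_congr rfl fun j _ => ?_
  have hre : (MvPowerSeries.monomial (Finsupp.equivFunOnFinite.symm (Fin.cons k j)) (1:ℚ))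
        * G ^ (∑ i, j i) * ((∏ i, k.choose (j i) : ℕ) : MvPowerSeries (Fin (t+1)) ℚ)
      = MvPowerSeries.C ((∏ i, k.choose (j i) : ℕ) : ℚ)
        * ((MvPowerSeries.monomial (Finsupp.equivFunOnFinite.symm (Fin.cons k j)) (1:ℚ))
            * G ^ (∑ i, j i)) := by
    rw [map_natCast]
    ring
  rw [hre, MvPowerSeries.coeff_C_mul, MvPowerSeries.coeff_monomial_mul, Nat.cast_prod]
  by_cases hc : k ≤ n ∧ ∀ i, j i ≤ a i
  · rw [if_pos ((ee_le k n j a).mpr hc), if_pos hc, one_mul, ee_sub]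
    have hlt : n - k < n := by omega
    rw [IH (n - k) hlt (∑ i, j i) (fun i => a i - j i)]
  · rw [if_neg (fun h => hc ((ee_le k n j a).mp h)), if_neg hc]

/-- Let `G` be a formal power series in `x, y_1, …, y_t` over `ℚ`
(variable `0` is `x`, variable `i.succ` is `y_i`) with zero constant term satisfying
`G = x·∏_{i=1}^t (1 + y_i·G)`. Then for every `n ≥ 1` and every tuple `a` with
`∑ a_i = n - 1`, the coefficient of `x^n·y_1^{a_1}⋯y_t^{a_t}` in `G` equals
`(1/n)·∏_{i=1}^t C(n, a_i)`. -/
theorem tary_tree_gf_coeff (t : ℕ) (ht : 1 ≤ t)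
    (G : MvPowerSeries (Fin (t + 1)) ℚ)
    (hG0 : MvPowerSeries.constantCoeff G = 0)
    (hG : G = MvPowerSeries.X 0 * ∏ i : Fin t, (1 + MvPowerSeries.X i.succ * G))
    (n : ℕ) (hn : 1 ≤ n) (a : Fin t → ℕ) (ha : ∑ i, a i = n - 1) :
    MvPowerSeries.coeff (Finsupp.equivFunOnFinite.symm (Fin.cons n a)) G =
      (1 / n : ℚ) * ∏ i, (n.choose (a i) : ℚ) := by
  have h := coeff_pow t G hG n 1 a
  rw [pow_one] at h
  rw [h]
  unfold dd
  rw [if_neg (by omega), if_pos (by omega)]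
  norm_num
end

section
/- For every integer t ≥ 1, every integer n ≥ 1, and every tuple of natural numbers (a_1, …, a_t) with a_1 + ⋯ + a_t = n − 1, the integer n divides the product C(n,a_1)·C(n,a_2)⋯C(n,a_t) of binomial coefficients; equivalently, (1/n)·∏_{i=1}^{t} C(n,a_i) is a nonnegative integer. -/
/-- For every `t ≥ 1`, `n ≥ 1`, and every tuple of natural numbers `(a_1, …, a_t)` with
`a_1 + ⋯ + a_t = n − 1`, the integer `n` divides `C(n,a_1)⋯C(n,a_t)`; equivalently
`(1/n)·∏ C(n,a_i)` is a nonnegative integer. -/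
theorem n_dvd_prod_choose (t : ℕ) (ht : 1 ≤ t) (n : ℕ) (hn : 1 ≤ n)
    (a : Fin t → ℕ) (ha : ∑ i, a i = n - 1) :
    n ∣ ∏ i, n.choose (a i) := by
  rcases eq_or_ne (∏ i, n.choose (a i)) 0 with h0 | h0
  · simp [h0]
  · rw [← Nat.factorization_le_iff_dvd (by omega) h0]
    intro p
    set e := n.factorization p with he
    rcases Nat.eq_zero_or_pos e with he0 | hepos
    · simp [he0]
    · have hp : p.Prime := by
        by_contra hnp
        simp [Nat.factorization_eq_zero_of_not_prime n hnp] at he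
        omega
      have hpn : p ∣ n :=
        (Nat.Prime.dvd_iff_one_le_factorization hp (by omega)).mpr (by omega)
      -- find i with ¬ p ∣ a i
      have hex : ∃ i, ¬ p ∣ a i := by
        by_contra hall
        push_neg at hall
        have hsum : p ∣ ∑ i, a i := Finset.dvd_sum (fun i _ => hall i)
        rw [ha] at hsum
        have h1 : p ∣ n - (n - 1) := Nat.dvd_sub hpn hsum
        have : n - (n - 1) = 1 := by omega
        rw [this] at h1
        exact hp.one_lt.ne' (Nat.eq_one_of_dvd_one h1 ▸ rfl) |>.elim
      obtain ⟨i, hpi⟩ := hex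
      have hai : 1 ≤ a i := by
        rcases Nat.eq_zero_or_pos (a i) with h | h
        · exact absurd (h ▸ dvd_zero p) hpi
        · exact h
      -- key identity: C(n, a i) * a i = n * C(n-1, a i - 1)
      have hkey : n.choose (a i) * a i = n * Nat.choose (n - 1) (a i - 1) := by
        have := Nat.add_one_mul_choose_eq (n - 1) (a i - 1)
        have h1 : (n - 1).succ = n := by omega
        have h2 : (a i - 1).succ = a i := by omega
        rw [Nat.succ_eq_add_one] at h1 h2
        rw [h1, h2] at this
        omega
      have hpe : p ^ e ∣ n := Nat.ordProj_dvd n p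
      have hdvd : p ^ e ∣ n.choose (a i) := by
        have h1 : p ^ e ∣ n.choose (a i) * a i := hkey ▸ Dvd.dvd.mul_right hpe _
        exact (Nat.Coprime.pow_left e ((Nat.Prime.coprime_iff_not_dvd hp).mpr hpi)).dvd_of_dvd_mul_right h1
      have hprod : p ^ e ∣ ∏ i, n.choose (a i) :=
        hdvd.trans (Finset.dvd_prod_of_mem _ (Finset.mem_univ i))
      exact (Nat.Prime.pow_dvd_iff_le_factorization hp h0).mp hprod
end
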